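/- Let n ≥ 3 and let M : Fin n → Fin n → Bool be an absorbing state of the binary trust gossip model. If an agent i has outgoing one-way trust relations to two distinct agents j and k (i.e. i ▷ j and i ▷ k with j ≠ k), then j ∼ k (the two targets share mutual trust). -/
import Mathlib


/-- A state `M` is absorbing if for all pairwise distinct agents `a z y`,
if `z` trusts `a` then `z` already agrees with `a` about `y`. -/
def Absorbing {n : ℕ} (M : Fin n → Fin n → Bool) : Prop :=
  ∀ a z y : Fin n, a ≠ z → a ≠ y → z ≠ y → M z a = true → M z y = M a y

/-- In an absorbing state, two one-way trust targets of one agent share mutual trust. -/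
theorem oneway_targets_mutual {n : ℕ} (hn : 3 ≤ n) (M : Fin n → Fin n → Bool)
    (hdiag : ∀ i, M i i = false) (habs : Absorbing M)
    (i j k : Fin n) (hij : i ≠ j) (hik : i ≠ k) (hjk : j ≠ k)
    (h1 : M i j = true ∧ M j i = false)
    (h2 : M i k = true ∧ M k i = false) :
    M j k = true ∧ M k j = true := by
  have hjk' := habs j i k hij.symm hjk hik h1.1
  have hkj' := habs k i j hik.symm hjk.symm hij h2.1
  exact ⟨hjk'.symm.trans h2.1, hkj'.symm.trans h1.1⟩
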